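/- arXiv:1908.01552 — 2 statements merged into one kernel-verified Lean document; each statement's English description precedes it below -/
import Mathlib

section
/- Let (X_k)_{k≥0} be i.i.d. real random variables with 𝔼[(X_0^+)^2] < ∞ and finite mean 𝔼X_0 (possibly −∞). Set S_n = X_0 + ⋯ + X_{n-1}. Then for every c > 𝔼X_0, the series ∑_{n≥0} ℙ(S_n ≥ cn) converges. -/
open MeasureTheory ProbabilityTheory Filter
open scoped ENNReal

lemma aux_exp_le {y b : ℝ} (hy : y ≤ b) (hb : 0 ≤ b) :
    Real.exp y ≤ 1 + y + y ^ 2 * Real.exp b := by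
  have h1 : (1 - y) * Real.exp y ≤ 1 := by
    have h := Real.add_one_le_exp (-y)
    have := Real.exp_pos y
    have hmul : (-y + 1) * Real.exp y ≤ Real.exp (-y) * Real.exp y :=
      mul_le_mul_of_nonneg_right h (le_of_lt this)
    rw [← Real.exp_add, neg_add_cancel, Real.exp_zero] at hmul
    linarith [hmul]
  have hb1 : (1 : ℝ) ≤ Real.exp b := Real.one_le_exp hb
  rcases le_or_gt y 0 with h | h
  · nlinarith [Real.exp_pos y, sq_nonneg y, mul_nonneg (sq_nonneg y) (sub_nonneg.2 hb1)]
  · have hey : Real.exp y ≤ Real.exp b := Real.exp_le_exp.2 hy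
    rcases le_or_gt 1 y with h1y | h1y
    · nlinarith [Real.exp_pos y, Real.exp_pos b]
    · nlinarith [Real.exp_pos y, Real.exp_pos b, sq_nonneg y]

lemma bdd_integrable {Ω : Type*} [MeasurableSpace Ω] (P : Measure Ω) [IsProbabilityMeasure P]
    {f : Ω → ℝ} (hf : Measurable f) (C : ℝ) (h : ∀ ω, |f ω| ≤ C) : Integrable f P :=
  (integrable_const C).mono' hf.aestronglyMeasurable
    (Filter.Eventually.of_forall (by simpa [Real.norm_eq_abs] using h))

lemma seriesA {Ω : Type*} [MeasurableSpace Ω] (P : Measure Ω) [IsProbabilityMeasure P]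
    (Y : Ω → ℝ) (hY : Measurable Y) (ε : ℝ) (hε : 0 < ε)
    (hsq : ∫⁻ ω, ENNReal.ofReal ((max (Y ω) 0) ^ 2) ∂P < ⊤) :
    ∑' n : ℕ, (n : ℝ≥0∞) * P {ω | ε * n < Y ω} < ⊤ := by
  have hms : ∀ n : ℕ, MeasurableSet {ω | ε * n < Y ω} := fun n =>
    measurableSet_lt measurable_const hY
  have key : ∀ n : ℕ, (n : ℝ≥0∞) * P {ω | ε * n < Y ω}
      = ∫⁻ ω, Set.indicator {ω | ε * n < Y ω} (fun _ => (n : ℝ≥0∞)) ω ∂P := fun n =>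
    (lintegral_indicator_const (hms n) _).symm
  calc ∑' n : ℕ, (n : ℝ≥0∞) * P {ω | ε * n < Y ω}
      = ∫⁻ ω, ∑' n : ℕ, Set.indicator {ω | ε * n < Y ω} (fun _ => (n : ℝ≥0∞)) ω ∂P := by
        rw [lintegral_tsum fun n => (measurable_const.indicator (hms n)).aemeasurable]
        exact tsum_congr key
    _ ≤ ∫⁻ ω, ENNReal.ofReal (2 / ε ^ 2 * (max (Y ω) 0) ^ 2 + 2) ∂P := by
        refine lintegral_mono fun ω => ?_
        set a : ℝ := max (Y ω) 0 with ha
        have ha0 : 0 ≤ a := le_max_right _ _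
        set m : ℕ := Nat.ceil (a / ε) with hm
        have hvanish : ∀ n : ℕ, n ∉ Finset.range m →
            Set.indicator {ω | ε * n < Y ω} (fun _ => (n : ℝ≥0∞)) ω = 0 := by
          intro n hn
          rw [Finset.mem_range, not_lt] at hn
          refine Set.indicator_of_notMem ?_ _
          simp only [Set.mem_setOf_eq, not_lt]
          have h1 : a / ε ≤ (m : ℝ) := Nat.le_ceil _
          have h2 : (m : ℝ) ≤ (n : ℝ) := Nat.cast_le.2 hn
          have : a ≤ ε * n := by
            rw [← div_le_iff₀' hε]; linarith
          exact le_trans (le_max_left _ _) this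
        rw [tsum_eq_sum hvanish]
        have hsum_le : ∑ n ∈ Finset.range m,
            Set.indicator {ω | ε * n < Y ω} (fun _ => (n : ℝ≥0∞)) ω ≤ (m : ℝ≥0∞) * m := by
          calc ∑ n ∈ Finset.range m, Set.indicator {ω | ε * n < Y ω} (fun _ => (n : ℝ≥0∞)) ω
              ≤ ∑ n ∈ Finset.range m, (m : ℝ≥0∞) := by
                refine Finset.sum_le_sum fun n hn => ?_
                refine le_trans (Set.indicator_le' (fun _ _ => le_refl _)
                  (fun _ _ => zero_le) ω) ?_
                exact Nat.cast_le.2 (le_of_lt (Finset.mem_range.1 hn))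
            _ = (m : ℝ≥0∞) * m := by
                rw [Finset.sum_const, Finset.card_range, nsmul_eq_mul]
        refine le_trans hsum_le ?_
        have hmr : (m : ℝ) < a / ε + 1 := Nat.ceil_lt_add_one (by positivity)
        have : (m : ℝ≥0∞) * m = ENNReal.ofReal ((m : ℝ) * m) := by
          rw [ENNReal.ofReal_mul (Nat.cast_nonneg m)]
          simp [ENNReal.ofReal_natCast]
        rw [this]
        refine ENNReal.ofReal_le_ofReal ?_
        have h2 : (m : ℝ) * m ≤ (a / ε + 1) ^ 2 := by nlinarith [Nat.cast_nonneg (α := ℝ) m]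
        have h3 : (a / ε + 1) ^ 2 ≤ 2 / ε ^ 2 * a ^ 2 + 2 := by
          have hu : 2 / ε ^ 2 * a ^ 2 = 2 * (a / ε) ^ 2 := by field_simp
          nlinarith [sq_nonneg (a / ε - 1)]
        linarith
    _ < ⊤ := by
        have hb : ∀ ω, ENNReal.ofReal (2 / ε ^ 2 * (max (Y ω) 0) ^ 2 + 2)
            ≤ ENNReal.ofReal (2 / ε ^ 2) * ENNReal.ofReal ((max (Y ω) 0) ^ 2) + 2 := by
          intro ω
          rw [ENNReal.ofReal_add (by positivity) (by norm_num),
            ENNReal.ofReal_mul (by positivity)]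
          simp [ENNReal.ofReal_ofNat]
        refine lt_of_le_of_lt (lintegral_mono hb) ?_
        rw [lintegral_add_right _ measurable_const, lintegral_const_mul' _ _ ENNReal.ofReal_ne_top,
          lintegral_const]
        simp only [measure_univ, mul_one]
        exact ENNReal.add_lt_top.2 ⟨ENNReal.mul_lt_top ENNReal.ofReal_lt_top hsq, by norm_num⟩

set_option maxHeartbeats 2000000 in
lemma seriesB {Ω : Type*} [MeasurableSpace Ω] (P : Measure Ω) [IsProbabilityMeasure P]
    (Y : ℕ → Ω → ℝ) (hYmeas : ∀ n, Measurable (Y n))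
    (hYindep : iIndepFun Y P)
    (hYident : ∀ n, P.map (Y n) = P.map (Y 0))
    (M : ℝ) (hYlb : ∀ n ω, -M ≤ Y n ω)
    (hYsq : Integrable (fun ω => (Y 0 ω) ^ 2) P)
    (c : ℝ) (hδ : ∫ ω, Y 0 ω ∂P < c) :
    ∑' n : ℕ, P {ω | c * n ≤ ∑ k ∈ Finset.range n,
        min (Y k ω) ((c - ∫ ω', Y 0 ω' ∂P) / 4 * n)} < ⊤ := by
  set μ : ℝ := ∫ ω, Y 0 ω ∂P with hμ
  set δ : ℝ := c - μ with hδdef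
  have hδ0 : 0 < δ := by simp only [hδdef]; linarith
  set ε : ℝ := δ / 4 with hεdef
  have hε0 : 0 < ε := by positivity
  have hYint : Integrable (Y 0) P := by
    refine (hYsq.add (integrable_const (|M| + 1))).mono'
      (hYmeas 0).aestronglyMeasurable (Eventually.of_forall fun ω => ?_)
    simp only [Pi.add_apply, Real.norm_eq_abs]
    rcases le_total (Y 0 ω) 0 with h | h
    · have h1 := hYlb 0 ω
      have h2 := le_abs_self M
      rw [abs_of_nonpos h]
      nlinarith [sq_nonneg (Y 0 ω)]
    · rw [abs_of_nonneg h]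
      nlinarith [sq_nonneg (Y 0 ω - 1), abs_nonneg M]
  set q : ℝ := ∫ ω, (Y 0 ω) ^ 2 ∂P with hq
  have hq0 : 0 ≤ q := integral_nonneg fun ω => sq_nonneg _
  set C : ℝ := 64 * q / δ ^ 2 with hC
  set K : ℝ := 4 * max 1 (Real.exp C) with hK
  have hK4 : (4 : ℝ) ≤ K := by
    rw [hK]; nlinarith [le_max_left 1 (Real.exp C)]
  have hKeC : 4 * Real.exp C ≤ K := by
    rw [hK]; nlinarith [le_max_right 1 (Real.exp C)]
  have hbound : ∀ n : ℕ, P {ω | c * n ≤ ∑ k ∈ Finset.range n, min (Y k ω) (ε * n)}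
      ≤ ENNReal.ofReal (K / ((n : ℝ) + 1) ^ 2) := by
    intro n
    rcases lt_or_ge n 2 with hn | hn
    · refine le_trans prob_le_one ?_
      rw [show (1 : ℝ≥0∞) = ENNReal.ofReal 1 by simp]
      refine ENNReal.ofReal_le_ofReal ?_
      rw [le_div_iff₀ (by positivity)]
      interval_cases n <;> norm_num <;> linarith
    · have hn0 : (0 : ℝ) < n := by positivity
      have hn1 : (1 : ℝ) ≤ (n : ℝ) := by exact_mod_cast Nat.one_le_of_lt hn
      have hn2 : (2 : ℝ) ≤ (n : ℝ) := by exact_mod_cast hn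
      have hlog : 0 < Real.log n := Real.log_pos (by linarith)
      set b : ℝ := ε * n with hb
      have hb0 : 0 ≤ b := by positivity
      set t : ℝ := 2 * Real.log n / (δ * n) with ht
      have ht0 : 0 < t := by positivity
      set Z : ℕ → Ω → ℝ := fun k ω => min (Y k ω) b with hZ
      set A : ℝ := t ^ 2 * Real.exp (t * b) with hA
      have hA0 : 0 ≤ A := by positivity
      have hZmeas : ∀ k, Measurable (Z k) := fun k => (hYmeas k).min measurable_const
      have hZle : ∀ k ω, Z k ω ≤ b := fun k ω => min_le_right _ _
      have hZabs : ∀ k ω, |Z k ω| ≤ |M| + b := by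
        intro k ω
        have h1 : -|M| ≤ Z k ω :=
          le_min (by linarith [le_abs_self M, hYlb k ω]) (by linarith [abs_nonneg M])
        rw [abs_le]
        constructor
        · linarith [abs_nonneg M, hb0]
        · linarith [hZle k ω, abs_nonneg M]
      have hZint : ∀ k, Integrable (Z k) P := fun k =>
        bdd_integrable P (hZmeas k) _ (hZabs k)
      have hZsqint : Integrable (fun ω => (Z 0 ω) ^ 2) P := by
        refine bdd_integrable P ((hZmeas 0).pow_const 2) ((|M| + b) ^ 2) fun ω => ?_
        rw [abs_of_nonneg (sq_nonneg _)]
        nlinarith [hZabs 0 ω, abs_nonneg (Z 0 ω), abs_nonneg M, sq_abs (Z 0 ω)]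
      have hexpint : ∀ k, Integrable (fun ω => Real.exp (t * Z k ω)) P := by
        intro k
        refine bdd_integrable P (((hZmeas k).const_mul t).exp) (Real.exp (t * b)) fun ω => ?_
        rw [abs_of_pos (Real.exp_pos _)]
        exact Real.exp_le_exp.2 (mul_le_mul_of_nonneg_left (hZle k ω) ht0.le)
      have hZmean : ∫ ω, Z 0 ω ∂P ≤ μ :=
        integral_mono (hZint 0) hYint fun ω => min_le_left _ _
      have hZsq_le : ∫ ω, (Z 0 ω) ^ 2 ∂P ≤ q := by
        refine integral_mono hZsqint hYsq fun ω => ?_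
        rcases le_total (Y 0 ω) b with h | h
        · simp [hZ, min_eq_left h]
        · have he : Z 0 ω = b := min_eq_right h
          simp only [he]
          nlinarith
      have hmgf0 : mgf (Z 0) P t ≤ Real.exp (t * μ + A * q) := by
        have hpt : ∀ ω, Real.exp (t * Z 0 ω)
            ≤ 1 + (t * Z 0 ω + A * (Z 0 ω) ^ 2) := by
          intro ω
          have h := aux_exp_le (y := t * Z 0 ω) (b := t * b)
            (mul_le_mul_of_nonneg_left (hZle 0 ω) ht0.le) (by positivity)
          calc Real.exp (t * Z 0 ω) ≤ 1 + t * Z 0 ω + (t * Z 0 ω) ^ 2 * Real.exp (t * b) := h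
            _ = 1 + (t * Z 0 ω + A * (Z 0 ω) ^ 2) := by rw [hA]; ring
        have hintg : Integrable (fun ω => t * Z 0 ω + A * (Z 0 ω) ^ 2) P :=
          ((hZint 0).const_mul t).add (hZsqint.const_mul A)
        have h1 : mgf (Z 0) P t ≤ ∫ ω, (1 + (t * Z 0 ω + A * (Z 0 ω) ^ 2)) ∂P :=
          integral_mono (hexpint 0) ((integrable_const 1).add hintg) hpt
        have i1 : ∫ ω, (t * Z 0 ω + A * (Z 0 ω) ^ 2) ∂P
            = t * ∫ ω, Z 0 ω ∂P + A * ∫ ω, (Z 0 ω) ^ 2 ∂P := by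
          rw [integral_add ((hZint 0).const_mul t) (hZsqint.const_mul A),
            integral_const_mul, integral_const_mul]
        have h2 : ∫ ω, (1 + (t * Z 0 ω + A * (Z 0 ω) ^ 2)) ∂P
            = 1 + (t * ∫ ω, Z 0 ω ∂P + A * ∫ ω, (Z 0 ω) ^ 2 ∂P) := by
          rw [integral_add (integrable_const 1) hintg, i1, integral_const]
          simp
        have h3 : 1 + (t * ∫ ω, Z 0 ω ∂P + A * ∫ ω, (Z 0 ω) ^ 2 ∂P)
            ≤ 1 + (t * μ + A * q) := by
          have e1 : t * ∫ ω, Z 0 ω ∂P ≤ t * μ := mul_le_mul_of_nonneg_left hZmean ht0.le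
          have e2 : A * ∫ ω, (Z 0 ω) ^ 2 ∂P ≤ A * q := mul_le_mul_of_nonneg_left hZsq_le hA0
          linarith
        calc mgf (Z 0) P t ≤ _ := h1
          _ = _ := h2
          _ ≤ 1 + (t * μ + A * q) := h3
          _ ≤ Real.exp (t * μ + A * q) := by
              linarith [Real.add_one_le_exp (t * μ + A * q)]
      have hmgfk : ∀ k, mgf (Z k) P t = mgf (Z 0) P t := by
        intro k
        have hcont : Continuous fun x : ℝ => Real.exp (t * min x b) :=
          Real.continuous_exp.comp (continuous_const.mul (continuous_id.min continuous_const))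
        have e : ∀ j : ℕ, mgf (Z j) P t = ∫ x, Real.exp (t * min x b) ∂(P.map (Y j)) := by
          intro j
          rw [integral_map (hYmeas j).aemeasurable hcont.aestronglyMeasurable]
          rfl
        rw [e k, e 0, hYident k]
      have hZindep : iIndepFun Z P :=
        hYindep.comp (fun _ => fun x : ℝ => min x b)
          (fun _ => measurable_id.min measurable_const)
      have hchern : (P {ω | c * n ≤ ∑ k ∈ Finset.range n, Z k ω}).toReal
          ≤ Real.exp (-t * (c * n)) * mgf (∑ k ∈ Finset.range n, Z k) P t := by
        have hintsum : Integrable (fun ω => Real.exp (t * (∑ k ∈ Finset.range n, Z k) ω)) P :=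
          hZindep.integrable_exp_mul_sum hZmeas fun i _ => hexpint i
        have h := measure_ge_le_exp_mul_mgf (μ := P) (X := ∑ k ∈ Finset.range n, Z k)
          (c * n) ht0.le hintsum
        convert h using 3
        simp [Finset.sum_apply, measureReal_def]
      have hmgfsum : mgf (∑ k ∈ Finset.range n, Z k) P t = mgf (Z 0) P t ^ n := by
        rw [hZindep.mgf_sum hZmeas,
          Finset.prod_congr rfl fun k _ => hmgfk k, Finset.prod_const, Finset.card_range]
      have hfinal : (P {ω | c * n ≤ ∑ k ∈ Finset.range n, Z k ω}).toReal
          ≤ Real.exp C / (n : ℝ) ^ 2 := by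
        have h4 : mgf (Z 0) P t ^ n ≤ Real.exp (t * μ + A * q) ^ n :=
          pow_le_pow_left₀ mgf_nonneg hmgf0 n
        have h5 : (P {ω | c * n ≤ ∑ k ∈ Finset.range n, Z k ω}).toReal
            ≤ Real.exp (-t * (c * n)) * Real.exp (t * μ + A * q) ^ n := by
          refine le_trans hchern ?_
          rw [hmgfsum]
          exact mul_le_mul_of_nonneg_left h4 (Real.exp_pos _).le
        rw [← Real.exp_nat_mul, ← Real.exp_add] at h5
        refine le_trans h5 ?_
        -- exponent computation
        set s : ℝ := (n : ℝ) ^ ((1 : ℝ) / 2) with hs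
        have hs0 : 0 < s := Real.rpow_pos_of_pos hn0 _
        have hss : s * s = (n : ℝ) := by
          rw [hs, ← Real.rpow_add hn0]
          norm_num
        have htb : t * b = Real.log n / 2 := by
          rw [ht, hb, hεdef]
          field_simp
          ring
        have hetb : Real.exp (t * b) = s := by
          rw [htb, hs, Real.rpow_def_of_pos hn0]
          congr 1
          ring
        have hlog4 : Real.log n ≤ 4 * (n : ℝ) ^ ((1 : ℝ) / 4) := by
          have h6 := Real.log_rpow hn0 ((1 : ℝ) / 4)
          have h7 := Real.log_le_sub_one_of_pos (Real.rpow_pos_of_pos hn0 ((1 : ℝ) / 4))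
          have h8 : (0 : ℝ) < (n : ℝ) ^ ((1 : ℝ) / 4) := Real.rpow_pos_of_pos hn0 _
          linarith
        have hq4 : ((n : ℝ) ^ ((1 : ℝ) / 4)) ^ 2 = s := by
          rw [hs, ← Real.rpow_natCast ((n : ℝ) ^ ((1 : ℝ) / 4)) 2, ← Real.rpow_mul hn0.le]
          norm_num
        have hlogsq : (Real.log n) ^ 2 ≤ 16 * s := by
          have h8 : (0 : ℝ) < (n : ℝ) ^ ((1 : ℝ) / 4) := Real.rpow_pos_of_pos hn0 _
          nlinarith [hlog4, hlog.le, h8.le, hq4]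
        have hterm : (n : ℝ) * (A * q) ≤ C := by
          have hnt : (n : ℝ) * t ^ 2 = 4 * (Real.log n) ^ 2 / (δ ^ 2 * n) := by
            rw [ht]
            field_simp
            ring
          have e1 : (n : ℝ) * (A * q) = 4 * q / δ ^ 2 * ((Real.log n) ^ 2 * s / n) := by
            rw [hA, hetb]
            have e0 : (n : ℝ) * (t ^ 2 * s * q) = ((n : ℝ) * t ^ 2) * (s * q) := by ring
            rw [e0, hnt]
            field_simp
          have e2 : (Real.log n) ^ 2 * s / n ≤ 16 := by
            rw [div_le_iff₀ hn0]
            nlinarith [mul_le_mul_of_nonneg_right hlogsq hs0.le, hss]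
          rw [e1, hC]
          calc 4 * q / δ ^ 2 * ((Real.log n) ^ 2 * s / n) ≤ 4 * q / δ ^ 2 * 16 :=
                mul_le_mul_of_nonneg_left e2 (by positivity)
            _ = 64 * q / δ ^ 2 := by ring
        have hexp_le : -t * (c * n) + n * (t * μ + A * q) ≤ -(2 * Real.log n) + C := by
          have htδ : t * (δ * n) = 2 * Real.log n := by
            rw [ht]
            field_simp
          have hcμ : c = μ + δ := by rw [hδdef]; ring
          have : -t * (c * n) + n * (t * μ) = -(2 * Real.log n) := by
            rw [hcμ]
            nlinarith [htδ]
          nlinarith [hterm, this]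
        have hexp2 : Real.exp (-(2 * Real.log n) + C) = Real.exp C / (n : ℝ) ^ 2 := by
          rw [Real.exp_add, Real.exp_neg, two_mul, Real.exp_add, Real.exp_log hn0]
          rw [div_eq_mul_inv]
          ring_nf
        rw [← hexp2]
        exact Real.exp_le_exp.2 hexp_le
      -- convert to ENNReal bound
      have hne : P {ω | c * n ≤ ∑ k ∈ Finset.range n, Z k ω} ≠ ⊤ := measure_ne_top _ _
      calc P {ω | c * n ≤ ∑ k ∈ Finset.range n, min (Y k ω) (ε * n)}
          = ENNReal.ofReal ((P {ω | c * n ≤ ∑ k ∈ Finset.range n, Z k ω}).toReal) := by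
            rw [ENNReal.ofReal_toReal hne]
        _ ≤ ENNReal.ofReal (Real.exp C / (n : ℝ) ^ 2) := ENNReal.ofReal_le_ofReal hfinal
        _ ≤ ENNReal.ofReal (K / ((n : ℝ) + 1) ^ 2) := by
            refine ENNReal.ofReal_le_ofReal ?_
            rw [div_le_div_iff₀ (by positivity) (by positivity)]
            have hsq4 : ((n : ℝ) + 1) ^ 2 ≤ 4 * (n : ℝ) ^ 2 := by nlinarith
            nlinarith [mul_le_mul_of_nonneg_left hsq4 (Real.exp_pos C).le,
              mul_le_mul_of_nonneg_right hKeC (sq_nonneg (n : ℝ))]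
  calc ∑' n : ℕ, P {ω | c * n ≤ ∑ k ∈ Finset.range n, min (Y k ω) (ε * n)}
      ≤ ∑' n : ℕ, ENNReal.ofReal (K / ((n : ℝ) + 1) ^ 2) := ENNReal.tsum_le_tsum hbound
    _ < ⊤ := by
        have h := Real.summable_one_div_nat_pow.2 (le_refl 2)
        have h2 := (summable_nat_add_iff 1).2 h
        have h3 := h2.mul_left K
        have h4 : Summable (fun n : ℕ => K / ((n : ℝ) + 1) ^ 2) := by
          refine h3.congr fun n => ?_
          push_cast
          rw [mul_one_div]
        rw [← ENNReal.ofReal_tsum_of_nonneg (fun n => by positivity) h4]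
        exact ENNReal.ofReal_lt_top

open Filter in
lemma exists_trunc {Ω : Type*} [MeasurableSpace Ω]
    (P : Measure Ω) [IsProbabilityMeasure P]
    (X : ℕ → Ω → ℝ) (hmeas : ∀ n, Measurable (X n))
    (hsq : ∫⁻ ω, ENNReal.ofReal ((max (X 0 ω) 0) ^ 2) ∂P < ⊤)
    (c : ℝ)
    (hc : ((∫ ω, max (X 0 ω) 0 ∂P : ℝ) : EReal)
        - ((∫⁻ ω, ENNReal.ofReal (-(X 0 ω)) ∂P : ℝ≥0∞) : EReal) < (c : EReal)) :
    ∃ M : ℕ, ∫ ω, max (X 0 ω) (-(M:ℝ)) ∂P < c := by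
  set Xp : Ω → ℝ := fun ω => max (X 0 ω) 0 with hXp_def
  have hXp_meas : Measurable Xp := (hmeas 0).max measurable_const
  have hXp_nn : ∀ ω, 0 ≤ Xp ω := fun ω => le_max_right _ _
  have hXpsq_int : Integrable (fun ω => (Xp ω) ^ 2) P := by
    refine ⟨(hXp_meas.pow_const 2).aestronglyMeasurable, ?_⟩
    rw [hasFiniteIntegral_iff_ofReal (Eventually.of_forall fun ω => sq_nonneg _)]
    exact hsq
  have hXp_int : Integrable Xp P := by
    refine (hXpsq_int.add (integrable_const 1)).mono' hXp_meas.aestronglyMeasurable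
      (Eventually.of_forall fun ω => ?_)
    have h0 := hXp_nn ω
    rw [Real.norm_eq_abs, abs_of_nonneg h0]
    simp only [Pi.add_apply]
    nlinarith [sq_nonneg (Xp ω - 1)]
  -- truncated negative parts
  set T : ℕ → Ω → ℝ := fun M ω => min (max (-(X 0 ω)) 0) (M : ℝ) with hT_def
  have hT_meas : ∀ M, Measurable (T M) := fun M =>
    (((hmeas 0).neg.max measurable_const).min measurable_const)
  have hT_nn : ∀ M ω, 0 ≤ T M ω := fun M ω => le_min (le_max_right _ _) (Nat.cast_nonneg M)
  have hT_int : ∀ M : ℕ, Integrable (T M) P := fun M =>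
    bdd_integrable P (hT_meas M) M fun ω => by
      rw [abs_of_nonneg (hT_nn M ω)]; exact min_le_right _ _
  have hY_eq : ∀ M : ℕ, ∀ ω, max (X 0 ω) (-(M:ℝ)) = Xp ω - T M ω := by
    intro M ω
    have hM : (0:ℝ) ≤ (M:ℝ) := Nat.cast_nonneg M
    simp only [hXp_def, hT_def, max_def, min_def]
    split_ifs <;> linarith
  have hYint : ∀ M : ℕ, ∫ ω, max (X 0 ω) (-(M:ℝ)) ∂P = ∫ ω, Xp ω ∂P - ∫ ω, T M ω ∂P := by
    intro M
    rw [show (fun ω => max (X 0 ω) (-(M:ℝ))) = fun ω => Xp ω - T M ω from funext (hY_eq M)] at *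
    exact integral_sub hXp_int (hT_int M)
  by_contra hcon
  push_neg at hcon
  -- so ∀ M, ∫ T M ≤ ∫ Xp - c
  have hTle : ∀ M : ℕ, ∫ ω, T M ω ∂P ≤ ∫ ω, Xp ω ∂P - c := by
    intro M
    have := hcon M
    rw [hYint M] at this
    linarith
  -- monotone convergence
  have hmono : ∀ ω, Monotone fun M : ℕ => ENNReal.ofReal (T M ω) := by
    intro ω M N hMN
    exact ENNReal.ofReal_le_ofReal (min_le_min le_rfl (by exact_mod_cast hMN))
  have hsup : ∀ ω, (⨆ M : ℕ, ENNReal.ofReal (T M ω)) = ENNReal.ofReal (-(X 0 ω)) := by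
    intro ω
    have : ENNReal.ofReal (-(X 0 ω)) = ENNReal.ofReal (max (-(X 0 ω)) 0) := by
      rcases le_total (-(X 0 ω)) 0 with h | h
      · rw [max_eq_right h, ENNReal.ofReal_of_nonpos h, ENNReal.ofReal_zero]
      · rw [max_eq_left h]
    rw [this]
    refine le_antisymm (iSup_le fun M => ENNReal.ofReal_le_ofReal (min_le_left _ _)) ?_
    refine le_trans (le_of_eq ?_) (le_iSup _ (Nat.ceil (max (-(X 0 ω)) 0)))
    congr 1
    rw [hT_def]
    exact (min_eq_left (le_trans (Nat.le_ceil _) le_rfl)).symm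
  have hMCT : ∫⁻ ω, ENNReal.ofReal (-(X 0 ω)) ∂P
      = ⨆ M : ℕ, ∫⁻ ω, ENNReal.ofReal (T M ω) ∂P := by
    rw [← lintegral_iSup (fun M => ((hT_meas M).ennreal_ofReal)) (fun M N h => fun ω => hmono ω h)]
    congr 1
    ext ω
    exact (hsup ω).symm
  have hTlint : ∀ M : ℕ, ∫⁻ ω, ENNReal.ofReal (T M ω) ∂P
      = ENNReal.ofReal (∫ ω, T M ω ∂P) := by
    intro M
    rw [ofReal_integral_eq_lintegral_ofReal (hT_int M) (Eventually.of_forall (hT_nn M))]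
  have hbound : ∫⁻ ω, ENNReal.ofReal (-(X 0 ω)) ∂P ≤ ENNReal.ofReal (∫ ω, Xp ω ∂P - c) := by
    rw [hMCT]
    exact iSup_le fun M => by rw [hTlint M]; exact ENNReal.ofReal_le_ofReal (hTle M)
  -- now contradiction with hc
  set L : ℝ≥0∞ := ∫⁻ ω, ENNReal.ofReal (-(X 0 ω)) ∂P with hL
  have hLne : L ≠ ⊤ := (lt_of_le_of_lt hbound ENNReal.ofReal_lt_top).ne
  have h0c : (0:ℝ) ≤ ∫ ω, Xp ω ∂P - c :=
    le_trans (integral_nonneg (hT_nn 0)) (hTle 0)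
  have hLtoReal : L.toReal ≤ ∫ ω, Xp ω ∂P - c :=
    ENNReal.toReal_le_of_le_ofReal h0c hbound
  have hLcoe : (L : EReal) = ((L.toReal : ℝ) : EReal) := by
    rw [← ENNReal.ofReal_toReal hLne, EReal.coe_ennreal_ofReal,
      max_eq_left ENNReal.toReal_nonneg, ENNReal.ofReal_toReal hLne]
  rw [hLcoe, ← EReal.coe_sub, EReal.coe_lt_coe_iff] at hc
  linarith



/-- Biggins' Lemma 1. Let `(X_k)` be i.i.d. real random variables with
`𝔼[(X_0⁺)²] < ∞`; the mean `𝔼X_0 = 𝔼X_0⁺ − 𝔼X_0⁻` (an extended real, possibly `−∞`).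
Set `S_n = X_0 + ⋯ + X_{n-1}`.  Then for every `c > 𝔼X_0`, the series
`∑_n ℙ(S_n ≥ cn)` converges. -/
theorem stmt2 {Ω : Type*} [MeasurableSpace Ω]
    (P : Measure Ω) [IsProbabilityMeasure P]
    (X : ℕ → Ω → ℝ) (hmeas : ∀ n, Measurable (X n))
    (hindep : iIndepFun X P)
    (hident : ∀ n, P.map (X n) = P.map (X 0))
    (hsq : ∫⁻ ω, ENNReal.ofReal ((max (X 0 ω) 0) ^ 2) ∂P < ⊤)
    (c : ℝ)
    -- c is strictly larger than the (possibly −∞) mean 𝔼X₀⁺ − 𝔼X₀⁻, in the extended reals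
    (hc : ((∫ ω, max (X 0 ω) 0 ∂P : ℝ) : EReal)
        - ((∫⁻ ω, ENNReal.ofReal (-(X 0 ω)) ∂P : ℝ≥0∞) : EReal) < (c : EReal)) :
    ∑' n : ℕ, P {ω | c * n ≤ ∑ k ∈ Finset.range n, X k ω} < ⊤ := by
  -- square integrability of positive part
  have hXp_meas : Measurable (fun ω => max (X 0 ω) 0) := (hmeas 0).max measurable_const
  have hXpsq_int : Integrable (fun ω => (max (X 0 ω) 0) ^ 2) P := by
    refine ⟨(hXp_meas.pow_const 2).aestronglyMeasurable, ?_⟩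
    rw [hasFiniteIntegral_iff_ofReal (Eventually.of_forall fun ω => sq_nonneg _)]
    exact hsq
  -- choose truncation level M
  obtain ⟨M, hμc⟩ : ∃ M : ℕ, ∫ ω, max (X 0 ω) (-(M : ℝ)) ∂P < c :=
    exists_trunc P X hmeas hsq c hc
  -- the truncated variables
  set g : ℝ → ℝ := fun x => max x (-(M : ℝ)) with hg
  have hgmeas : Measurable g := measurable_id.max measurable_const
  set Y : ℕ → Ω → ℝ := fun k ω => g (X k ω) with hY
  have hYmeas : ∀ k, Measurable (Y k) := fun k => hgmeas.comp (hmeas k)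
  have hYindep : iIndepFun Y P :=
    hindep.comp (fun _ => g) fun _ => hgmeas
  have hYident : ∀ n, P.map (Y n) = P.map (Y 0) := by
    intro n
    have e : ∀ j : ℕ, P.map (Y j) = (P.map (X j)).map g := fun j =>
      (Measure.map_map hgmeas (hmeas j)).symm
    rw [e n, e 0, hident n]
  have hYlb : ∀ n ω, -(M : ℝ) ≤ Y n ω := fun n ω => le_max_right _ _
  have hYmax : ∀ ω, max (Y 0 ω) 0 = max (X 0 ω) 0 := by
    intro ω
    simp only [hY, hg]
    rw [max_assoc, max_eq_right (neg_nonpos.2 (Nat.cast_nonneg M))]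
  have hYsq : Integrable (fun ω => (Y 0 ω) ^ 2) P := by
    refine (hXpsq_int.add (integrable_const ((M : ℝ) ^ 2))).mono'
      ((hYmeas 0).pow_const 2).aestronglyMeasurable (Eventually.of_forall fun ω => ?_)
    simp only [Pi.add_apply, Real.norm_eq_abs]
    rw [abs_of_nonneg (sq_nonneg (Y 0 ω))]
    rcases le_total (X 0 ω) (-(M : ℝ)) with h | h
    · have hy : Y 0 ω = -(M : ℝ) := max_eq_right h
      rw [hy]
      nlinarith [sq_nonneg (max (X 0 ω) 0)]
    · have hy : Y 0 ω = X 0 ω := max_eq_left h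
      rw [hy]
      rcases le_total (X 0 ω) 0 with h2 | h2
      · have hx : max (X 0 ω) 0 = 0 := max_eq_right h2
        rw [hx]
        nlinarith [Nat.cast_nonneg (α := ℝ) M]
      · have hx : max (X 0 ω) 0 = X 0 ω := max_eq_left h2
        rw [hx]
        nlinarith [sq_nonneg (M : ℝ)]
  set μ : ℝ := ∫ ω, Y 0 ω ∂P with hμ
  have hμlt : μ < c := hμc
  set ε : ℝ := (c - μ) / 4 with hε
  have hε0 : 0 < ε := by rw [hε]; linarith
  -- series A
  have hA : ∑' n : ℕ, (n : ℝ≥0∞) * P {ω | ε * n < Y 0 ω} < ⊤ := by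
    refine seriesA P (Y 0) (hYmeas 0) ε hε0 ?_
    calc ∫⁻ ω, ENNReal.ofReal ((max (Y 0 ω) 0) ^ 2) ∂P
        = ∫⁻ ω, ENNReal.ofReal ((max (X 0 ω) 0) ^ 2) ∂P := by
          refine lintegral_congr fun ω => by rw [hYmax ω]
      _ < ⊤ := hsq
  -- series B
  have hB : ∑' n : ℕ, P {ω | c * n ≤ ∑ k ∈ Finset.range n,
      min (Y k ω) ((c - ∫ ω', Y 0 ω' ∂P) / 4 * n)} < ⊤ :=
    seriesB P Y hYmeas hYindep hYident (M : ℝ) hYlb hYsq c hμc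
  -- event inclusion and per-n bound
  have hbound : ∀ n : ℕ, P {ω | c * n ≤ ∑ k ∈ Finset.range n, X k ω}
      ≤ (n : ℝ≥0∞) * P {ω | ε * n < Y 0 ω}
        + P {ω | c * n ≤ ∑ k ∈ Finset.range n, min (Y k ω) (ε * n)} := by
    intro n
    have hsub : {ω | c * n ≤ ∑ k ∈ Finset.range n, X k ω}
        ⊆ (⋃ k ∈ Finset.range n, {ω | ε * n < Y k ω})
          ∪ {ω | c * n ≤ ∑ k ∈ Finset.range n, min (Y k ω) (ε * n)} := by
      intro ω hω
      simp only [Set.mem_setOf_eq] at hω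
      by_cases hcase : ∃ k ∈ Finset.range n, ε * n < Y k ω
      · obtain ⟨k, hk, hkω⟩ := hcase
        exact Or.inl (Set.mem_biUnion hk hkω)
      · push_neg at hcase
        refine Or.inr ?_
        simp only [Set.mem_setOf_eq]
        have h1 : ∑ k ∈ Finset.range n, min (Y k ω) (ε * n)
            = ∑ k ∈ Finset.range n, Y k ω :=
          Finset.sum_congr rfl fun k hk => min_eq_left (hcase k hk)
        have h2 : ∑ k ∈ Finset.range n, X k ω ≤ ∑ k ∈ Finset.range n, Y k ω :=
          Finset.sum_le_sum fun k _ => le_max_left _ _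
        rw [h1]
        linarith
    refine le_trans (measure_mono hsub)
      (le_trans (measure_union_le _ _) (add_le_add ?_ le_rfl))
    refine le_trans (measure_biUnion_finset_le _ _) (le_of_eq ?_)
    have heq : ∀ k : ℕ, P {ω | ε * n < Y k ω} = P {ω | ε * n < Y 0 ω} := by
      intro k
      have e : ∀ j : ℕ, P {ω | ε * n < Y j ω} = (P.map (Y j)) (Set.Ioi (ε * n)) := by
        intro j
        rw [Measure.map_apply (hYmeas j) measurableSet_Ioi]
        rfl
      rw [e k, e 0, hYident k]
    calc ∑ k ∈ Finset.range n, P {ω | ε * n < Y k ω}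
        = ∑ _k ∈ Finset.range n, P {ω | ε * n < Y 0 ω} :=
          Finset.sum_congr rfl fun k _ => heq k
      _ = (n : ℝ≥0∞) * P {ω | ε * n < Y 0 ω} := by
          rw [Finset.sum_const, Finset.card_range, nsmul_eq_mul]
  -- combine
  calc ∑' n : ℕ, P {ω | c * n ≤ ∑ k ∈ Finset.range n, X k ω}
      ≤ ∑' n : ℕ, ((n : ℝ≥0∞) * P {ω | ε * n < Y 0 ω}
          + P {ω | c * n ≤ ∑ k ∈ Finset.range n, min (Y k ω) (ε * n)}) :=
        ENNReal.tsum_le_tsum hbound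
    _ = (∑' n : ℕ, (n : ℝ≥0∞) * P {ω | ε * n < Y 0 ω})
          + ∑' n : ℕ, P {ω | c * n ≤ ∑ k ∈ Finset.range n, min (Y k ω) (ε * n)} :=
        ENNReal.tsum_add
    _ < ⊤ := ENNReal.add_lt_top.2 ⟨hA, hB⟩
end

section
/- With the setup of the smoothing transform in random environment, set g_n(ξ,u) = u^{-1}|φ_n(ξ,u) − φ_{n-1}(ξ,u)| where φ_n(ξ,u) = Hφ_{n-1}(Tξ,u) and φ_0(ξ,u) = e^{-u}. Then g_{n+1}(ξ,u) ≤ E_ξ[g_n(Tξ, u e^{X_0(ξ)})], where X_0(ξ) has the size-biased distribution G_ξ(log y) = E_ξ[∑_{y_i^{(0)}(ξ)≤y} y_i^{(0)}(ξ)]; iterating, g_{n+1}(ξ,u) ≤ E_ξ[g_1(T^n ξ, u e^{S_n(ξ)})] with S_n = X_0 + ⋯ + X_{n-1}. -/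
open MeasureTheory ProbabilityTheory Filter
open scoped ENNReal

noncomputable section

/-- The shift operator on environments: `(T ξ)_n = ξ_{n+1}`. -/
def shiftT {E : Type*} (ξ : ℕ → E) : ℕ → E := fun n => ξ (n + 1)

lemma stmt9aux_prod_diff_le {ι : Type*} (s : Finset ι) (a b : ι → ℝ)
    (ha : ∀ i ∈ s, 0 ≤ a i ∧ a i ≤ 1) (hb : ∀ i ∈ s, 0 ≤ b i ∧ b i ≤ 1) :
    |∏ i ∈ s, a i - ∏ i ∈ s, b i| ≤ ∑ i ∈ s, |a i - b i| := by
  classical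
  induction s using Finset.induction_on with
  | empty => simp
  | @insert x s hx ih =>
    simp only [Finset.prod_insert hx, Finset.sum_insert hx]
    have ha' : ∀ i ∈ s, 0 ≤ a i ∧ a i ≤ 1 := fun i hi => ha i (Finset.mem_insert_of_mem hi)
    have hb' : ∀ i ∈ s, 0 ≤ b i ∧ b i ≤ 1 := fun i hi => hb i (Finset.mem_insert_of_mem hi)
    have hax := ha x (Finset.mem_insert_self x s)
    have hbx := hb x (Finset.mem_insert_self x s)
    have hpa : 0 ≤ ∏ i ∈ s, a i := Finset.prod_nonneg fun i hi => (ha' i hi).1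
    have hpa1 : ∏ i ∈ s, a i ≤ 1 := Finset.prod_le_one (fun i hi => (ha' i hi).1) (fun i hi => (ha' i hi).2)
    calc |a x * ∏ i ∈ s, a i - b x * ∏ i ∈ s, b i|
        ≤ |a x * ∏ i ∈ s, a i - b x * ∏ i ∈ s, a i| + |b x * ∏ i ∈ s, a i - b x * ∏ i ∈ s, b i| := by
          exact abs_sub_le _ _ _
      _ = |a x - b x| * |∏ i ∈ s, a i| + |b x| * |∏ i ∈ s, a i - ∏ i ∈ s, b i| := by
          rw [← sub_mul, ← mul_sub, abs_mul, abs_mul]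
      _ ≤ |a x - b x| * 1 + 1 * ∑ i ∈ s, |a i - b i| := by
          refine add_le_add ?_ ?_
          · refine mul_le_mul_of_nonneg_left ?_ (abs_nonneg _)
            rw [abs_of_nonneg hpa]; exact hpa1
          · refine mul_le_mul ?_ (ih ha' hb') (abs_nonneg _) zero_le_one
            rw [abs_of_nonneg hbx.1]; exact hbx.2
      _ = |a x - b x| + ∑ i ∈ s, |a i - b i| := by ring

lemma stmt9aux_one_sub_sum_le_prod {ι : Type*} (s : Finset ι) (a : ι → ℝ)
    (ha : ∀ i ∈ s, 0 ≤ a i ∧ a i ≤ 1) :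
    1 - ∑ i ∈ s, (1 - a i) ≤ ∏ i ∈ s, a i := by
  classical
  induction s using Finset.induction_on with
  | empty => simp
  | @insert x s hx ih =>
    simp only [Finset.prod_insert hx, Finset.sum_insert hx]
    have ha' : ∀ i ∈ s, 0 ≤ a i ∧ a i ≤ 1 := fun i hi => ha i (Finset.mem_insert_of_mem hi)
    have hax := ha x (Finset.mem_insert_self x s)
    have hsum : 0 ≤ ∑ i ∈ s, (1 - a i) := Finset.sum_nonneg fun i hi => by linarith [(ha' i hi).2]
    have h1 := ih ha'
    nlinarith [hax.1, hax.2]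

lemma stmt9aux_tsum_good {y : ℕ → ℝ} (hfin : (Function.support y).Finite) (h : ℝ → ℝ) (u : ℝ) :
    ∑' i, y i * h (u * y i) = ∑ i ∈ hfin.toFinset, y i * h (u * y i) := by
  refine tsum_eq_sum fun i hi => ?_
  have : y i = 0 := by simpa [Function.mem_support] using (fun hh => hi (hfin.mem_toFinset.2 hh))
  simp [this]

lemma stmt9aux_tprod_good {y : ℕ → ℝ} (hfin : (Function.support y).Finite) {h : ℝ → ℝ}
    (h1 : h 0 = 1) (u : ℝ) :
    ∏' i, h (u * y i) = ∏ i ∈ hfin.toFinset, h (u * y i) := by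
  refine tprod_eq_prod fun i hi => ?_
  have : y i = 0 := by simpa [Function.mem_support] using (fun hh => hi (hfin.mem_toFinset.2 hh))
  simp [this, h1]

lemma stmt9aux_shift_meas {E : Type*} [MeasurableSpace E] : Measurable (shiftT (E := E)) :=
  measurable_pi_lambda _ fun n => measurable_pi_apply (n + 1)

lemma stmt9aux_shift_invariant {E : Type*} [MeasurableSpace E]
    (τ : Measure (ℕ → E)) [IsProbabilityMeasure τ]
    (hIndep : iIndepFun (fun n ξ => ξ n) τ)
    (hIdent : ∀ n, τ.map (fun ξ => ξ n) = τ.map (fun ξ => ξ 0)) :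
    τ.map shiftT = τ := by
  classical
  have hms : Measurable (shiftT (E := E)) := stmt9aux_shift_meas
  have : IsProbabilityMeasure (τ.map shiftT) := Measure.isProbabilityMeasure_map hms.aemeasurable
  have hcoord : ∀ (k : ℕ) (B : Set E), MeasurableSet B →
      τ ((fun ξ : ℕ → E => ξ k) ⁻¹' B) = (τ.map (fun ξ => ξ 0)) B := by
    intro k B hB
    rw [← Measure.map_apply (measurable_pi_apply k) hB, hIdent k]
  refine MeasureTheory.ext_of_generate_finite _
    (MeasureTheory.generateFrom_squareCylinders (α := fun _ : ℕ => E)).symm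
    (MeasureTheory.isPiSystem_squareCylinders (fun _ => MeasurableSpace.isPiSystem_measurableSet)
      (fun _ => MeasurableSet.univ)) ?_ (by simp)
  rintro S ⟨s, t, ht, rfl⟩
  have htm : ∀ i, MeasurableSet (t i) := fun i => ht i (Set.mem_univ i)
  have hpi_eq : ∀ (s : Finset ℕ) (t : ℕ → Set E),
      (↑s : Set ℕ).pi t = ⋂ i ∈ s, (fun ξ : ℕ → E => ξ i) ⁻¹' t i := by
    intro s t; ext ξ; simp [Set.mem_pi]
  have hmeas_pi : MeasurableSet ((↑s : Set ℕ).pi t) :=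
    MeasurableSet.pi (Set.to_countable _) (fun i _ => htm i)
  rw [Measure.map_apply hms hmeas_pi]
  have hpre : shiftT ⁻¹' ((↑s : Set ℕ).pi t)
      = ⋂ i ∈ s.image (· + 1), (fun ξ : ℕ → E => ξ i) ⁻¹' t (i - 1) := by
    ext ξ
    simp only [Set.mem_preimage, Set.mem_pi, Finset.coe_image, Set.mem_iInter, Finset.mem_coe,
      Finset.mem_image]
    constructor
    · rintro h i ⟨j, hj, rfl⟩
      simpa [shiftT] using h j (by simpa using hj)
    · intro h i hi
      simpa [shiftT] using h (i + 1) ⟨i, by simpa using hi, rfl⟩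
  rw [hpre, hpi_eq]
  rw [hIndep.measure_inter_preimage_eq_mul _ (fun i _ => htm (i - 1)),
      hIndep.measure_inter_preimage_eq_mul _ (fun i _ => htm i)]
  rw [Finset.prod_image (by intro a _ b _ h; simp only at h; omega)]
  refine Finset.prod_congr rfl fun i _ => ?_
  rw [hcoord, hcoord] <;> first | exact htm _ | skip
  simp


def stmt9aux_Sig (y : ℕ → ℝ) : ℝ := (∑' i, ENNReal.ofReal (y i)).toReal

lemma stmt9aux_Sig_meas : Measurable stmt9aux_Sig :=
  (Measurable.ennreal_tsum fun i =>
    ENNReal.measurable_ofReal.comp (measurable_pi_apply i)).ennreal_toReal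

lemma stmt9aux_off_support {y : ℕ → ℝ} (hfin : (Function.support y).Finite) {i : ℕ}
    (hi : i ∉ hfin.toFinset) : y i = 0 := by
  by_contra hh
  exact hi (hfin.mem_toFinset.2 hh)

lemma stmt9aux_Sig_eq {y : ℕ → ℝ} (hy : ∀ i, 0 ≤ y i) (hfin : (Function.support y).Finite) :
    stmt9aux_Sig y = ∑ i ∈ hfin.toFinset, y i := by
  have h1 : ∑' i, ENNReal.ofReal (y i) = ∑ i ∈ hfin.toFinset, ENNReal.ofReal (y i) :=
    tsum_eq_sum (fun i hi => by rw [stmt9aux_off_support hfin hi]; simp)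
  rw [stmt9aux_Sig, h1, ← ENNReal.ofReal_sum_of_nonneg (fun i _ => hy i),
    ENNReal.toReal_ofReal (Finset.sum_nonneg fun i _ => hy i)]

lemma stmt9aux_Sig_int {μ : Measure (ℕ → ℝ)} [IsProbabilityMeasure μ]
    (hp : ∀ᵐ y ∂μ, ∀ i, 0 ≤ y i) (hf : ∀ᵐ y ∂μ, (Function.support y).Finite)
    (hm : ∫⁻ y, ∑' i, ENNReal.ofReal (y i) ∂μ = 1) :
    Integrable stmt9aux_Sig μ ∧ ∫ y, stmt9aux_Sig y ∂μ = 1 := by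
  have hnn : 0 ≤ᵐ[μ] stmt9aux_Sig := Filter.Eventually.of_forall fun y => ENNReal.toReal_nonneg
  have hae : (fun y => ENNReal.ofReal (stmt9aux_Sig y)) =ᵐ[μ] fun y => ∑' i, ENNReal.ofReal (y i) := by
    filter_upwards [hp, hf] with y hy hfin
    rw [stmt9aux_Sig_eq hy hfin, ENNReal.ofReal_sum_of_nonneg (fun i _ => hy i)]
    exact (tsum_eq_sum (fun i hi => by rw [stmt9aux_off_support hfin hi]; simp)).symm
  have hli : ∫⁻ y, ENNReal.ofReal (stmt9aux_Sig y) ∂μ = 1 := by rw [lintegral_congr_ae hae, hm]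
  have hint : Integrable stmt9aux_Sig μ := by
    refine ⟨stmt9aux_Sig_meas.aestronglyMeasurable, ?_⟩
    rw [hasFiniteIntegral_iff_ofReal hnn, hli]; exact ENNReal.one_lt_top
  refine ⟨hint, ?_⟩
  rw [integral_eq_lintegral_of_nonneg_ae hnn hint.aestronglyMeasurable, hli]; simp

lemma stmt9aux_sumAEmeas {μ : Measure (ℕ → ℝ)}
    (hp : ∀ᵐ y ∂μ, ∀ i, 0 ≤ y i) (hf : ∀ᵐ y ∂μ, (Function.support y).Finite)
    {h ψ : ℝ → ℝ} (hψ : Measurable ψ) (hagree : ∀ v, 0 ≤ v → h v = ψ v) {u : ℝ} (hu : 0 ≤ u) :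
    AEStronglyMeasurable (fun y => ∑' i, y i * h (u * y i)) μ := by
  have hmeas : ∀ m : ℕ, AEMeasurable (fun y : ℕ → ℝ => ∑ i ∈ Finset.range m, y i * ψ (u * y i)) μ :=
    fun m => (Finset.measurable_sum _ fun i _ => (measurable_pi_apply i).mul
      (hψ.comp (measurable_const.mul (measurable_pi_apply i)))).aemeasurable
  refine (aemeasurable_of_tendsto_metrizable_ae' hmeas ?_).aestronglyMeasurable
  filter_upwards [hp, hf] with y hy hfin
  obtain ⟨M, hM⟩ := hfin.toFinset.exists_nat_subset_range
  refine tendsto_atTop_of_eventually_const (i₀ := M) fun m hm => ?_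
  rw [stmt9aux_tsum_good hfin h u,
    ← Finset.sum_subset (hM.trans (Finset.range_subset_range.2 hm))
      (fun i _ hi => by rw [stmt9aux_off_support hfin hi]; ring)]
  exact Finset.sum_congr rfl fun i _ => by rw [hagree _ (mul_nonneg hu (hy i))]

lemma stmt9aux_prodAEmeas {μ : Measure (ℕ → ℝ)}
    (hp : ∀ᵐ y ∂μ, ∀ i, 0 ≤ y i) (hf : ∀ᵐ y ∂μ, (Function.support y).Finite)
    {h ψ : ℝ → ℝ} (hψ : Measurable ψ) (hagree : ∀ v, 0 ≤ v → h v = ψ v) (h1 : h 0 = 1)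
    {u : ℝ} (hu : 0 ≤ u) :
    AEStronglyMeasurable (fun y => ∏' i, h (u * y i)) μ := by
  have hmeas : ∀ m : ℕ, AEMeasurable (fun y : ℕ → ℝ => ∏ i ∈ Finset.range m, ψ (u * y i)) μ :=
    fun m => (Finset.measurable_prod _ fun i _ =>
      hψ.comp (measurable_const.mul (measurable_pi_apply i))).aemeasurable
  refine (aemeasurable_of_tendsto_metrizable_ae' hmeas ?_).aestronglyMeasurable
  filter_upwards [hp, hf] with y hy hfin
  obtain ⟨M, hM⟩ := hfin.toFinset.exists_nat_subset_range
  refine tendsto_atTop_of_eventually_const (i₀ := M) fun m hm => ?_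
  rw [stmt9aux_tprod_good hfin h1 u,
    ← Finset.prod_subset (hM.trans (Finset.range_subset_range.2 hm))
      (fun i _ hi => by rw [stmt9aux_off_support hfin hi, mul_zero, ← hagree 0 le_rfl, h1])]
  exact Finset.prod_congr rfl fun i _ => by rw [hagree _ (mul_nonneg hu (hy i))]

lemma stmt9aux_sum_pt {y : ℕ → ℝ} (hy : ∀ i, 0 ≤ y i) (hfin : (Function.support y).Finite)
    {h ψ : ℝ → ℝ} (hagree : ∀ v, 0 ≤ v → h v = ψ v)
    (hbd : ∀ v, 0 ≤ v → 0 ≤ h v ∧ h v ≤ 1) {u : ℝ} (hu : 0 ≤ u) :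
    0 ≤ ∑' i, y i * h (u * y i) ∧ (∑' i, y i * h (u * y i)) ≤ stmt9aux_Sig y ∧
    (∑' i, y i * h (u * y i)) = (∑' i, ENNReal.ofReal (y i * ψ (u * y i))).toReal := by
  have key : ∀ i, 0 ≤ y i * h (u * y i) := fun i =>
    mul_nonneg (hy i) (hbd _ (mul_nonneg hu (hy i))).1
  have keyψ : ∀ i, 0 ≤ y i * ψ (u * y i) := fun i => by
    rw [← hagree _ (mul_nonneg hu (hy i))]; exact key i
  have t1 := stmt9aux_tsum_good hfin h u
  refine ⟨?_, ?_, ?_⟩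
  · rw [t1]; exact Finset.sum_nonneg fun i _ => key i
  · rw [t1, stmt9aux_Sig_eq hy hfin]
    refine Finset.sum_le_sum fun i _ => ?_
    calc y i * h (u * y i) ≤ y i * 1 :=
          mul_le_mul_of_nonneg_left (hbd _ (mul_nonneg hu (hy i))).2 (hy i)
      _ = y i := mul_one _
  · rw [t1]
    have h2 : ∑' i, ENNReal.ofReal (y i * ψ (u * y i))
        = ∑ i ∈ hfin.toFinset, ENNReal.ofReal (y i * ψ (u * y i)) :=
      tsum_eq_sum fun i hi => by rw [stmt9aux_off_support hfin hi]; simp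
    rw [h2, ← ENNReal.ofReal_sum_of_nonneg (fun i _ => keyψ i),
      ENNReal.toReal_ofReal (Finset.sum_nonneg fun i _ => keyψ i)]
    exact Finset.sum_congr rfl fun i _ => by rw [hagree _ (mul_nonneg hu (hy i))]

def stmt9aux_KI (μ : Measure (ℕ → ℝ)) (h : ℝ → ℝ) (u : ℝ) : ℝ :=
  ∫ y, ∑' i, y i * h (u * y i) ∂μ

lemma stmt9aux_KIint {μ : Measure (ℕ → ℝ)} [IsProbabilityMeasure μ]
    (hp : ∀ᵐ y ∂μ, ∀ i, 0 ≤ y i) (hf : ∀ᵐ y ∂μ, (Function.support y).Finite)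
    (hm : ∫⁻ y, ∑' i, ENNReal.ofReal (y i) ∂μ = 1)
    {h ψ : ℝ → ℝ} (hψ : Measurable ψ) (hagree : ∀ v, 0 ≤ v → h v = ψ v)
    (hbd : ∀ v, 0 ≤ v → 0 ≤ h v ∧ h v ≤ 1) {u : ℝ} (hu : 0 ≤ u) :
    Integrable (fun y => ∑' i, y i * h (u * y i)) μ := by
  refine (stmt9aux_Sig_int hp hf hm).1.mono' (stmt9aux_sumAEmeas hp hf hψ hagree hu) ?_
  filter_upwards [hp, hf] with y hy hfin
  have := stmt9aux_sum_pt hy hfin hagree hbd hu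
  rw [Real.norm_eq_abs, abs_of_nonneg this.1]; exact this.2.1

lemma stmt9aux_KInice {μ : Measure (ℕ → ℝ)} [IsProbabilityMeasure μ]
    (hp : ∀ᵐ y ∂μ, ∀ i, 0 ≤ y i) (hf : ∀ᵐ y ∂μ, (Function.support y).Finite)
    (hm : ∫⁻ y, ∑' i, ENNReal.ofReal (y i) ∂μ = 1)
    {h ψ : ℝ → ℝ} (hψ : Measurable ψ) (hagree : ∀ v, 0 ≤ v → h v = ψ v)
    (hbd : ∀ v, 0 ≤ v → 0 ≤ h v ∧ h v ≤ 1) :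
    (∀ u : ℝ, 0 ≤ u → 0 ≤ stmt9aux_KI μ h u ∧ stmt9aux_KI μ h u ≤ 1) ∧
    ∃ Ψ : ℝ → ℝ, Measurable Ψ ∧ ∀ u : ℝ, 0 ≤ u → stmt9aux_KI μ h u = Ψ u := by
  obtain ⟨hSint, hSval⟩ := stmt9aux_Sig_int hp hf hm
  constructor
  · intro u hu
    have hint := stmt9aux_KIint hp hf hm hψ hagree hbd hu
    constructor
    · refine integral_nonneg_of_ae ?_
      filter_upwards [hp, hf] with y hy hfin
      exact (stmt9aux_sum_pt hy hfin hagree hbd hu).1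
    · refine le_trans ?_ (le_of_eq hSval)
      refine integral_mono_ae hint hSint ?_
      filter_upwards [hp, hf] with y hy hfin
      exact (stmt9aux_sum_pt hy hfin hagree hbd hu).2.1
  · refine ⟨fun u => ∫ y, (∑' i, ENNReal.ofReal (y i * ψ (u * y i))).toReal ∂μ, ?_, ?_⟩
    · have hF : StronglyMeasurable fun p : ℝ × (ℕ → ℝ) =>
          (∑' i, ENNReal.ofReal (p.2 i * ψ (p.1 * p.2 i))).toReal := by
        refine Measurable.stronglyMeasurable ?_
        refine Measurable.ennreal_toReal (Measurable.ennreal_tsum fun i => ?_)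
        exact ENNReal.measurable_ofReal.comp
          (((measurable_pi_apply i).comp measurable_snd).mul
            (hψ.comp (measurable_fst.mul ((measurable_pi_apply i).comp measurable_snd))))
      exact (hF.integral_prod_right' (ν := μ)).measurable
    · intro u hu
      refine integral_congr_ae ?_
      filter_upwards [hp, hf] with y hy hfin
      exact (stmt9aux_sum_pt hy hfin hagree hbd hu).2.2

lemma stmt9aux_KImono {μ : Measure (ℕ → ℝ)} [IsProbabilityMeasure μ]
    (hp : ∀ᵐ y ∂μ, ∀ i, 0 ≤ y i) (hf : ∀ᵐ y ∂μ, (Function.support y).Finite)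
    (hm : ∫⁻ y, ∑' i, ENNReal.ofReal (y i) ∂μ = 1)
    {h h' ψ' : ℝ → ℝ} (hψ' : Measurable ψ') (hagree' : ∀ v, 0 ≤ v → h' v = ψ' v)
    (hbd' : ∀ v, 0 ≤ v → 0 ≤ h' v ∧ h' v ≤ 1)
    (hnn : ∀ v, 0 ≤ v → 0 ≤ h v) (hle : ∀ v, 0 < v → h v ≤ h' v)
    {u : ℝ} (hu : 0 < u) :
    stmt9aux_KI μ h u ≤ stmt9aux_KI μ h' u := by
  have hint' := stmt9aux_KIint hp hf hm hψ' hagree' hbd' hu.le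
  refine integral_mono_of_nonneg ?_ hint' ?_
  · filter_upwards [hp, hf] with y hy hfin
    rw [Pi.zero_apply, stmt9aux_tsum_good hfin h u]
    exact Finset.sum_nonneg fun i _ => mul_nonneg (hy i) (hnn _ (mul_nonneg hu.le (hy i)))
  · filter_upwards [hp, hf] with y hy hfin
    rw [stmt9aux_tsum_good hfin h u, stmt9aux_tsum_good hfin h' u]
    refine Finset.sum_le_sum fun i hi => ?_
    have hyi : 0 < y i :=
      lt_of_le_of_ne (hy i) (Ne.symm (by simpa [Function.mem_support] using hfin.mem_toFinset.1 hi))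
    exact mul_le_mul_of_nonneg_left (hle _ (mul_pos hu hyi)) (hy i)

lemma stmt9aux_prod_pt {y : ℕ → ℝ} (hy : ∀ i, 0 ≤ y i) (hfin : (Function.support y).Finite)
    {f : ℝ → ℝ} (hbf : ∀ v, 0 ≤ v → 1 - v ≤ f v ∧ 0 ≤ f v ∧ f v ≤ 1)
    {u : ℝ} (hu : 0 ≤ u) :
    0 ≤ ∏' i, f (u * y i) ∧ (∏' i, f (u * y i)) ≤ 1 ∧
      1 - u * stmt9aux_Sig y ≤ ∏' i, f (u * y i) := by
  have hf1 : f 0 = 1 := le_antisymm (hbf 0 le_rfl).2.2 (by simpa using (hbf 0 le_rfl).1)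
  have harg : ∀ i, 0 ≤ u * y i := fun i => mul_nonneg hu (hy i)
  rw [stmt9aux_tprod_good hfin hf1 u]
  refine ⟨Finset.prod_nonneg fun i _ => (hbf _ (harg i)).2.1,
    Finset.prod_le_one (fun i _ => (hbf _ (harg i)).2.1) (fun i _ => (hbf _ (harg i)).2.2), ?_⟩
  have hkey := stmt9aux_one_sub_sum_le_prod hfin.toFinset (fun i => f (u * y i))
    (fun i _ => ⟨(hbf _ (harg i)).2.1, (hbf _ (harg i)).2.2⟩)
  refine le_trans ?_ hkey
  have hsum : ∑ i ∈ hfin.toFinset, (1 - f (u * y i)) ≤ ∑ i ∈ hfin.toFinset, u * y i :=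
    Finset.sum_le_sum fun i _ => by linarith [(hbf _ (harg i)).1]
  rw [stmt9aux_Sig_eq hy hfin, Finset.mul_sum]
  linarith

lemma stmt9aux_maxext {f : ℝ → ℝ} (hcf : ContinuousOn f (Set.Ici 0)) :
    Continuous (fun v : ℝ => f (max v 0)) := by
  refine hcf.comp_continuous (continuous_id.max continuous_const) fun x => ?_
  exact Set.mem_Ici.2 (le_max_right x 0)

lemma stmt9aux_phiStep {μ : Measure (ℕ → ℝ)} [IsProbabilityMeasure μ]
    (hp : ∀ᵐ y ∂μ, ∀ i, 0 ≤ y i) (hf : ∀ᵐ y ∂μ, (Function.support y).Finite)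
    (hm : ∫⁻ y, ∑' i, ENNReal.ofReal (y i) ∂μ = 1)
    {f : ℝ → ℝ} (hcf : ContinuousOn f (Set.Ici 0))
    (hbf : ∀ v, 0 ≤ v → 1 - v ≤ f v ∧ 0 ≤ f v ∧ f v ≤ 1) :
    (∀ u : ℝ, 0 ≤ u → 1 - u ≤ (∫ y, ∏' i, f (u * y i) ∂μ) ∧
      0 ≤ (∫ y, ∏' i, f (u * y i) ∂μ) ∧ (∫ y, ∏' i, f (u * y i) ∂μ) ≤ 1) ∧
    ContinuousOn (fun u => ∫ y, ∏' i, f (u * y i) ∂μ) (Set.Ici 0) := by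
  obtain ⟨hSint, hSval⟩ := stmt9aux_Sig_int hp hf hm
  have hf1 : f 0 = 1 := le_antisymm (hbf 0 le_rfl).2.2 (by simpa using (hbf 0 le_rfl).1)
  set ψ : ℝ → ℝ := fun v => f (max v 0) with hψdef
  have hψ : Measurable ψ := (stmt9aux_maxext hcf).measurable
  have hagree : ∀ v : ℝ, 0 ≤ v → f v = ψ v := fun v hv => by
    simp only [hψdef, max_eq_left hv]
  have hAESM : ∀ u : ℝ, 0 ≤ u → AEStronglyMeasurable (fun y => ∏' i, f (u * y i)) μ :=
    fun u hu => stmt9aux_prodAEmeas hp hf hψ hagree hf1 hu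
  have hInt : ∀ u : ℝ, 0 ≤ u → Integrable (fun y => ∏' i, f (u * y i)) μ := by
    intro u hu
    refine (integrable_const (1 : ℝ)).mono' (hAESM u hu) ?_
    filter_upwards [hp, hf] with y hy hfin
    have := stmt9aux_prod_pt hy hfin hbf hu
    rw [Real.norm_eq_abs, abs_of_nonneg this.1]; exact this.2.1
  constructor
  · intro u hu
    refine ⟨?_, ?_, ?_⟩
    · have hlow : Integrable (fun y => 1 - u * stmt9aux_Sig y) μ :=
        (integrable_const (1 : ℝ)).sub (hSint.const_mul u)
      have := integral_mono_ae hlow (hInt u hu) ?_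
      · calc (1 : ℝ) - u = ∫ y, (1 - u * stmt9aux_Sig y) ∂μ := by
              rw [integral_sub (integrable_const 1) (hSint.const_mul u), integral_const,
                integral_const_mul, hSval]
              simp
          _ ≤ _ := this
      · filter_upwards [hp, hf] with y hy hfin
        exact (stmt9aux_prod_pt hy hfin hbf hu).2.2
    · refine integral_nonneg_of_ae ?_
      filter_upwards [hp, hf] with y hy hfin
      exact (stmt9aux_prod_pt hy hfin hbf hu).1
    · have := integral_mono_ae (hInt u hu) (integrable_const (1 : ℝ)) ?_
      · simpa using this
      · filter_upwards [hp, hf] with y hy hfin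
        exact (stmt9aux_prod_pt hy hfin hbf hu).2.1
  · intro x₀ hx₀
    refine continuousWithinAt_of_dominated (bound := fun _ => (1 : ℝ)) ?_ ?_ (integrable_const 1) ?_
    · filter_upwards [self_mem_nhdsWithin] with x hx
      exact hAESM x hx
    · filter_upwards [self_mem_nhdsWithin] with x hx
      filter_upwards [hp, hf] with y hy hfin
      have := stmt9aux_prod_pt hy hfin hbf hx
      rw [Real.norm_eq_abs, abs_of_nonneg this.1]; exact this.2.1
    · filter_upwards [hp, hf] with y hy hfin
      have hcψ : Continuous (fun x : ℝ => ∏ i ∈ hfin.toFinset, ψ (x * y i)) :=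
        continuous_finset_prod _ fun i _ =>
          (stmt9aux_maxext hcf).comp (continuous_id.mul continuous_const)
      refine (hcψ.continuousWithinAt).congr ?_ ?_
      · intro x hx
        rw [stmt9aux_tprod_good hfin hf1 x]
        exact Finset.prod_congr rfl fun i _ => by rw [hagree _ (mul_nonneg hx (hy i))]
      · rw [stmt9aux_tprod_good hfin hf1 x₀]
        exact Finset.prod_congr rfl fun i _ => by rw [hagree _ (mul_nonneg hx₀ (hy i))]

lemma stmt9aux_gbound {f f' : ℝ → ℝ}
    (hbf : ∀ v, 0 ≤ v → 1 - v ≤ f v ∧ 0 ≤ f v ∧ f v ≤ 1)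
    (hbf' : ∀ v, 0 ≤ v → 1 - v ≤ f' v ∧ 0 ≤ f' v ∧ f' v ≤ 1) :
    ∀ v : ℝ, 0 ≤ v → 0 ≤ v⁻¹ * |f' v - f v| ∧ v⁻¹ * |f' v - f v| ≤ 1 := by
  intro v hv
  rcases eq_or_lt_of_le hv with h0 | h0
  · rw [← h0]; norm_num
  have habs : |f' v - f v| ≤ v := by
    rw [abs_sub_le_iff]
    constructor
    · linarith [(hbf' v hv).2.2, (hbf v hv).1]
    · linarith [(hbf v hv).2.2, (hbf' v hv).1]
  constructor
  · exact mul_nonneg (inv_nonneg.2 hv) (abs_nonneg _)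
  · calc v⁻¹ * |f' v - f v| ≤ v⁻¹ * v := mul_le_mul_of_nonneg_left habs (inv_nonneg.2 hv)
      _ = 1 := inv_mul_cancel₀ h0.ne'

lemma stmt9aux_coreIneq {μ : Measure (ℕ → ℝ)} [IsProbabilityMeasure μ]
    (hp : ∀ᵐ y ∂μ, ∀ i, 0 ≤ y i) (hf : ∀ᵐ y ∂μ, (Function.support y).Finite)
    (hm : ∫⁻ y, ∑' i, ENNReal.ofReal (y i) ∂μ = 1)
    {f f' : ℝ → ℝ} (hcf : ContinuousOn f (Set.Ici 0)) (hcf' : ContinuousOn f' (Set.Ici 0))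
    (hbf : ∀ v, 0 ≤ v → 1 - v ≤ f v ∧ 0 ≤ f v ∧ f v ≤ 1)
    (hbf' : ∀ v, 0 ≤ v → 1 - v ≤ f' v ∧ 0 ≤ f' v ∧ f' v ≤ 1)
    {u : ℝ} (hu : 0 < u) :
    |(∫ y, ∏' i, f' (u * y i) ∂μ) - ∫ y, ∏' i, f (u * y i) ∂μ|
      ≤ u * ∫ y, ∑' i, y i * ((u * y i)⁻¹ * |f' (u * y i) - f (u * y i)|) ∂μ := by
  set h : ℝ → ℝ := fun v => v⁻¹ * |f' v - f v| with hhdef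
  have hf1 : f 0 = 1 := le_antisymm (hbf 0 le_rfl).2.2 (by simpa using (hbf 0 le_rfl).1)
  have hf1' : f' 0 = 1 := le_antisymm (hbf' 0 le_rfl).2.2 (by simpa using (hbf' 0 le_rfl).1)
  have hbd : ∀ v : ℝ, 0 ≤ v → 0 ≤ h v ∧ h v ≤ 1 := stmt9aux_gbound hbf hbf'
  have hψm : Measurable (fun v : ℝ => (max v 0)⁻¹ * |f' (max v 0) - f (max v 0)|) := by
    refine Measurable.mul ?_ ?_
    · exact ((continuous_id.max continuous_const).measurable).inv
    · exact ((stmt9aux_maxext hcf').sub (stmt9aux_maxext hcf)).measurable.abs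
  have hagree : ∀ v : ℝ, 0 ≤ v → h v = (max v 0)⁻¹ * |f' (max v 0) - f (max v 0)| :=
    fun v hv => by rw [hhdef]; simp only [max_eq_left hv]
  -- integrability of products
  have hψf : Measurable (fun v : ℝ => f (max v 0)) := (stmt9aux_maxext hcf).measurable
  have hψf' : Measurable (fun v : ℝ => f' (max v 0)) := (stmt9aux_maxext hcf').measurable
  have hagf : ∀ v : ℝ, 0 ≤ v → f v = f (max v 0) := fun v hv => by rw [max_eq_left hv]
  have hagf' : ∀ v : ℝ, 0 ≤ v → f' v = f' (max v 0) := fun v hv => by rw [max_eq_left hv]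
  have hIntA : Integrable (fun y => ∏' i, f (u * y i)) μ := by
    refine (integrable_const (1 : ℝ)).mono' (stmt9aux_prodAEmeas hp hf hψf hagf hf1 hu.le) ?_
    filter_upwards [hp, hf] with y hy hfin
    have := stmt9aux_prod_pt hy hfin hbf hu.le
    rw [Real.norm_eq_abs, abs_of_nonneg this.1]; exact this.2.1
  have hIntA' : Integrable (fun y => ∏' i, f' (u * y i)) μ := by
    refine (integrable_const (1 : ℝ)).mono' (stmt9aux_prodAEmeas hp hf hψf' hagf' hf1' hu.le) ?_
    filter_upwards [hp, hf] with y hy hfin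
    have := stmt9aux_prod_pt hy hfin hbf' hu.le
    rw [Real.norm_eq_abs, abs_of_nonneg this.1]; exact this.2.1
  have hIntD : Integrable (fun y => ∑' i, y i * h (u * y i)) μ :=
    stmt9aux_KIint hp hf hm hψm hagree hbd hu.le
  -- pointwise key bound
  have key : ∀ᵐ y ∂μ, ‖(∏' i, f' (u * y i)) - ∏' i, f (u * y i)‖
      ≤ u * ∑' i, y i * h (u * y i) := by
    filter_upwards [hp, hf] with y hy hfin
    rw [Real.norm_eq_abs, stmt9aux_tprod_good hfin hf1 u, stmt9aux_tprod_good hfin hf1' u,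
      stmt9aux_tsum_good hfin h u, Finset.mul_sum]
    refine le_trans (stmt9aux_prod_diff_le hfin.toFinset _ _
      (fun i _ => ⟨(hbf' _ (mul_nonneg hu.le (hy i))).2.1, (hbf' _ (mul_nonneg hu.le (hy i))).2.2⟩)
      (fun i _ => ⟨(hbf _ (mul_nonneg hu.le (hy i))).2.1, (hbf _ (mul_nonneg hu.le (hy i))).2.2⟩)) ?_
    refine le_of_eq (Finset.sum_congr rfl fun i hi => ?_)
    have hyi : 0 < y i :=
      lt_of_le_of_ne (hy i) (Ne.symm (by simpa [Function.mem_support] using hfin.mem_toFinset.1 hi))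
    have hne : u * y i ≠ 0 := (mul_pos hu hyi).ne'
    rw [hhdef]
    field_simp
  calc |(∫ y, ∏' i, f' (u * y i) ∂μ) - ∫ y, ∏' i, f (u * y i) ∂μ|
      = ‖∫ y, ((∏' i, f' (u * y i)) - ∏' i, f (u * y i)) ∂μ‖ := by
        rw [integral_sub hIntA' hIntA, Real.norm_eq_abs]
    _ ≤ ∫ y, ‖(∏' i, f' (u * y i)) - ∏' i, f (u * y i)‖ ∂μ := norm_integral_le_integral_norm _
    _ ≤ ∫ y, u * ∑' i, y i * h (u * y i) ∂μ := by
        refine integral_mono_of_nonneg (Filter.Eventually.of_forall fun y => norm_nonneg _)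
          (hIntD.const_mul u) key
    _ = u * ∫ y, ∑' i, y i * h (u * y i) ∂μ := integral_const_mul u _

/-- The size-biased transfer operator:
`(K g)(ξ,u) = E_ξ[∑_i y_i^{(0)}(ξ) g(Tξ, u y_i^{(0)}(ξ))] = E_ξ[g(Tξ, u e^{X_0(ξ)})]`,
where `X_0(ξ)` has the size-biased distribution `G_ξ(log y) = E_ξ[∑_{y_i ≤ y} y_i]`.
Its `n`-th iterate realizes `E_ξ[g(T^n ξ, u e^{S_n(ξ)})]` with `S_n = X_0 + ⋯ + X_{n−1}`. -/
noncomputable def Kop {E : Type*} [MeasurableSpace E] (Y : Kernel (ℕ → E) (ℕ → ℝ))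
    (g : (ℕ → E) → ℝ → ℝ) : (ℕ → E) → ℝ → ℝ :=
  fun ξ u => ∫ y, ∑' i, y i * g (shiftT ξ) (u * y i) ∂(Y ξ)

/-- With `φ_0(ξ,u) = e^{−u}`, `φ_{n+1} = Hφ_n(Tξ,u)` and
`g_{n+1}(ξ,u) = u⁻¹|φ_{n+1}(ξ,u) − φ_n(ξ,u)|` (here `g (n+1)` denotes the paper's
`g_{n+2}`, i.e. `g n = g_{n+1}` of the paper), one has
`g_{n+1}(ξ,u) ≤ E_ξ[g_n(Tξ, u e^{X_0(ξ)})] = (K g_n)(ξ,u)`, and iterating,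
`g_{n+1}(ξ,u) ≤ E_ξ[g_1(T^n ξ, u e^{S_n(ξ)})] = (K^[n] g_1)(ξ,u)`. -/
theorem stmt9 {E : Type*} [MeasurableSpace E]
    (τ : Measure (ℕ → E)) [IsProbabilityMeasure τ]
    (hEnvIndep : iIndepFun (fun n ξ => ξ n) τ)
    (hEnvIdent : ∀ n, τ.map (fun ξ => ξ n) = τ.map (fun ξ => ξ 0))
    (Y : Kernel (ℕ → E) (ℕ → ℝ)) [IsMarkovKernel Y]
    (hY0 : ∀ ξ ξ' : ℕ → E, ξ 0 = ξ' 0 → Y ξ = Y ξ')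
    (hpos : ∀ᵐ ξ ∂τ, ∀ᵐ y ∂(Y ξ), ∀ i, 0 ≤ y i)
    (hmean : ∀ᵐ ξ ∂τ, ∫⁻ y, ∑' i, ENNReal.ofReal (y i) ∂(Y ξ) = 1)
    (hfinsupp : ∀ᵐ ξ ∂τ, ∀ᵐ y ∂(Y ξ), (Function.support y).Finite)
    (φ : ℕ → (ℕ → E) → ℝ → ℝ)
    (hφ0 : ∀ ξ u, φ 0 ξ u = Real.exp (-u))
    (hφrec : ∀ n, ∀ᵐ ξ ∂τ, ∀ u : ℝ, 0 ≤ u →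
      φ (n + 1) ξ u = ∫ y, ∏' i, φ n (shiftT ξ) (u * y i) ∂(Y ξ))
    -- `g n` is the paper's `g_{n+1}`: `g n ξ u = u⁻¹ |φ_{n+1}(ξ,u) − φ_n(ξ,u)|`
    (g : ℕ → (ℕ → E) → ℝ → ℝ)
    (hg : ∀ n ξ u, g n ξ u = u⁻¹ * |φ (n + 1) ξ u - φ n ξ u|) :
    ∀ n : ℕ, ∀ᵐ ξ ∂τ, ∀ u : ℝ, 0 < u →
      g (n + 1) ξ u ≤ Kop Y (g n) ξ u ∧
      g n ξ u ≤ (Kop Y)^[n] (g 0) ξ u := by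

  classical
  have hms : Measurable (shiftT (E := E)) := stmt9aux_shift_meas
  have hinv : τ.map shiftT = τ := stmt9aux_shift_invariant τ hEnvIndep hEnvIdent
  have aeshift : ∀ {P : (ℕ → E) → Prop}, (∀ᵐ ξ ∂τ, P ξ) → ∀ᵐ ξ ∂τ, P (shiftT ξ) := by
    intro P hP
    refine MeasureTheory.ae_of_ae_map hms.aemeasurable ?_
    rwa [hinv]
  have Φ : ∀ n, ∀ᵐ ξ ∂τ,
      (∀ u : ℝ, 0 ≤ u → 1 - u ≤ φ n ξ u ∧ 0 ≤ φ n ξ u ∧ φ n ξ u ≤ 1) ∧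
      ContinuousOn (φ n ξ) (Set.Ici 0) := by
    intro n
    induction n with
    | zero =>
      refine Filter.Eventually.of_forall fun ξ => ⟨fun u hu => ?_, ?_⟩
      · rw [hφ0]
        exact ⟨by linarith [Real.add_one_le_exp (-u)], (Real.exp_pos _).le,
          Real.exp_le_one_iff.2 (by linarith)⟩
      · have hc : ContinuousOn (fun u : ℝ => Real.exp (-u)) (Set.Ici 0) :=
          (Real.continuous_exp.comp continuous_neg).continuousOn
        exact hc.congr fun u _ => hφ0 ξ u
    | succ n ih =>
      filter_upwards [hφrec n, aeshift ih, hpos, hmean, hfinsupp] with ξ hrec hih hp hm hf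
      have hstep := stmt9aux_phiStep (μ := Y ξ) hp hf hm (f := φ n (shiftT ξ)) hih.2 hih.1
      refine ⟨fun u hu => ?_, ?_⟩
      · rw [hrec u hu]; exact hstep.1 u hu
      · exact hstep.2.congr fun u hu => hrec u hu
  have NiceG : ∀ n, ∀ᵐ ξ ∂τ,
      (∀ v : ℝ, 0 ≤ v → 0 ≤ g n ξ v ∧ g n ξ v ≤ 1) ∧
      ∃ ψ : ℝ → ℝ, Measurable ψ ∧ ∀ v : ℝ, 0 ≤ v → g n ξ v = ψ v := by
    intro n
    filter_upwards [Φ n, Φ (n + 1)] with ξ h1 h2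
    constructor
    · intro v hv
      have := stmt9aux_gbound h1.1 h2.1 v hv
      rw [hg]; exact this
    · refine ⟨fun v => (max v 0)⁻¹ * |φ (n + 1) ξ (max v 0) - φ n ξ (max v 0)|, ?_, ?_⟩
      · exact (((continuous_id.max continuous_const).measurable).inv).mul
          (((stmt9aux_maxext h2.2).sub (stmt9aux_maxext h1.2)).measurable.abs)
      · intro v hv; rw [hg]; simp only [max_eq_left hv]
  have NiceK : ∀ n, ∀ᵐ ξ ∂τ,
      (∀ v : ℝ, 0 ≤ v → 0 ≤ (Kop Y)^[n] (g 0) ξ v ∧ (Kop Y)^[n] (g 0) ξ v ≤ 1) ∧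
      ∃ ψ : ℝ → ℝ, Measurable ψ ∧ ∀ v : ℝ, 0 ≤ v → (Kop Y)^[n] (g 0) ξ v = ψ v := by
    intro n
    induction n with
    | zero => simpa using NiceG 0
    | succ n ih =>
      filter_upwards [hpos, hmean, hfinsupp, aeshift ih] with ξ hp hm hf hih
      obtain ⟨hbd, ψ, hψ, hagree⟩ := hih
      have hKI := stmt9aux_KInice (μ := Y ξ) hp hf hm hψ hagree hbd
      rw [Function.iterate_succ_apply']
      exact ⟨fun v hv => hKI.1 v hv, hKI.2⟩
  have Main1 : ∀ n, ∀ᵐ ξ ∂τ, ∀ u : ℝ, 0 < u → g (n + 1) ξ u ≤ Kop Y (g n) ξ u := by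
    intro n
    filter_upwards [hφrec n, hφrec (n + 1), aeshift (Φ n), aeshift (Φ (n + 1)), hpos, hmean,
      hfinsupp] with ξ hrec1 hrec2 hΦn hΦn1 hp hm hf
    intro u hu
    have hcore := stmt9aux_coreIneq (μ := Y ξ) hp hf hm hΦn.2 hΦn1.2 hΦn.1 hΦn1.1 hu
    have hKop : Kop Y (g n) ξ u = ∫ y, ∑' i, y i *
        ((u * y i)⁻¹ * |φ (n + 1) (shiftT ξ) (u * y i) - φ n (shiftT ξ) (u * y i)|) ∂(Y ξ) := by
      simp only [Kop, hg]
    rw [hg, hrec2 u hu.le, hrec1 u hu.le, hKop]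
    refine le_trans (mul_le_mul_of_nonneg_left hcore (inv_nonneg.2 hu.le)) (le_of_eq ?_)
    rw [← mul_assoc, inv_mul_cancel₀ hu.ne', one_mul]
  have Main2 : ∀ n, ∀ᵐ ξ ∂τ, ∀ u : ℝ, 0 < u → g n ξ u ≤ (Kop Y)^[n] (g 0) ξ u := by
    intro n
    induction n with
    | zero => exact Filter.Eventually.of_forall fun ξ u hu => le_refl _
    | succ n ih =>
      filter_upwards [Main1 n, hpos, hmean, hfinsupp, aeshift ih, aeshift (NiceG n),
        aeshift (NiceK n)] with ξ hM1 hp hm hf hle hNg hNk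
      intro u hu
      refine (hM1 u hu).trans ?_
      rw [Function.iterate_succ_apply']
      obtain ⟨hbd', ψ', hψ', hagree'⟩ := hNk
      exact stmt9aux_KImono (μ := Y ξ) hp hf hm hψ' hagree' hbd'
        (fun v hv => (hNg.1 v hv).1) (fun v hv => hle v hv) hu
  intro n
  filter_upwards [Main1 n, Main2 n] with ξ h1 h2
  exact fun u hu => ⟨h1 u hu, h2 u hu⟩
end
end
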